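/- Define x_i (for i ≥ 2) by x_i(2m) = i·m for m ≥ 1 and filling odd positions with the increasing enumeration of positive integers not of the form i·m. Then for i < k, the sequence of differences x_i(2m+1) − x_k(2m+1) over odd positions is nonnegative and tends to infinity; combined with the even-position differences (k−i)·m, the full difference sequence |x_i(n) − x_k(n)| tends to infinity, so x_i and x_k are divergent. -/
import Mathlib

open Filter

private def eN (i m : ℕ) : ℕ := m + 1 + m / (i - 1)

private lemma eN_mono {i : ℕ} (_hi : 2 ≤ i) : StrictMono (eN i) := by
  intro a b hab
  have : a / (i-1) ≤ b / (i-1) := Nat.div_le_div_right hab.le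
  simp only [eN]; omega

private lemma eN_range {i : ℕ} (hi : 2 ≤ i) :
    Set.range (eN i) = {n : ℕ | 0 < n ∧ ¬∃ m : ℕ, 1 ≤ m ∧ n = i * m} := by
  ext n
  simp only [Set.mem_range, Set.mem_setOf_eq]
  constructor
  · rintro ⟨m, rfl⟩
    set q := m / (i - 1) with hq
    set r := m % (i - 1) with hr
    have hm : (i-1) * q + r = m := Nat.div_add_mod m (i-1)
    have hrlt : r < i - 1 := Nat.mod_lt _ (by omega)
    have hmul : (i-1) * q + q = i * q := by
      rw [Nat.sub_mul, Nat.one_mul]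
      have : q ≤ i * q := Nat.le_mul_of_pos_left q (by omega)
      omega
    have heq : eN i m = i * q + (r + 1) := by
      simp only [eN, ← hq]; omega
    refine ⟨by omega, ?_⟩
    rintro ⟨m', _hm', hmm⟩
    have hdvd : i ∣ eN i m := ⟨m', hmm⟩
    rw [heq] at hdvd
    have : i ∣ r + 1 := (Nat.dvd_add_right (Dvd.intro q rfl)).mp hdvd
    have := Nat.le_of_dvd (by omega) this
    omega
  · rintro ⟨hn, hnd⟩
    set s := n % i with hs
    set q := n / i with hqn
    have hm : i * q + s = n := Nat.div_add_mod n i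
    have hslt : s < i := Nat.mod_lt _ (by omega)
    have hs0 : s ≠ 0 := by
      intro h
      have hq1 : 1 ≤ q := by
        rcases Nat.eq_zero_or_pos q with h0 | h0
        · rw [h0, Nat.mul_zero] at hm; omega
        · exact h0
      exact hnd ⟨q, hq1, by omega⟩
    refine ⟨(s - 1) + (i - 1) * q, ?_⟩
    have hdiv : ((s - 1) + (i - 1) * q) / (i - 1) = q := by
      rw [Nat.add_mul_div_left _ _ (by omega : 0 < i - 1),
        Nat.div_eq_of_lt (by omega)]
      omega
    have hmul : (i-1) * q + q = i * q := by
      rw [Nat.sub_mul, Nat.one_mul]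
      have : q ≤ i * q := Nat.le_mul_of_pos_left q (by omega)
      omega
    simp only [eN, hdiv]; omega

private lemma key (b c d m : ℕ) (hd : 0 < d) (hdc : d < c)
    (hm : (b + d) * (c * d) ≤ m) : m / c + b ≤ m / d := by
  set t := m / (c * d) with ht
  have hcd : 0 < c * d := Nat.mul_pos (by omega) hd
  have htb : b + d ≤ t := (Nat.le_div_iff_mul_le hcd).mpr hm
  have h1 : t * c ≤ m / d := by
    apply (Nat.le_div_iff_mul_le hd).mpr
    calc t * c * d = t * (c * d) := by ring
      _ ≤ m := by rw [ht]; exact Nat.div_mul_le_self m (c*d)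
  have hmod : c * d * t + m % (c * d) = m := Nat.div_add_mod m (c*d)
  have hmlt : m % (c * d) < c * d := Nat.mod_lt _ hcd
  have h2 : m / c < t * d + d := by
    apply Nat.div_lt_of_lt_mul
    have : c * (t * d + d) = c * d * t + c * d := by ring
    omega
  have h3 : t * d + t ≤ t * c := by
    have := Nat.mul_le_mul_left t (show d + 1 ≤ c by omega)
    rw [Nat.mul_add, Nat.mul_one] at this
    omega
  omega

theorem xi_xk_divergent (i k : ℕ) (hi : 2 ≤ i) (hik : i < k)
    (xi xk : ℕ → ℕ)
    (hxi_even : ∀ m : ℕ, 1 ≤ m → xi (2 * m) = i * m)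
    (hxk_even : ∀ m : ℕ, 1 ≤ m → xk (2 * m) = k * m)
    (hxi_mono : StrictMono (fun m : ℕ => xi (2 * m + 1)))
    (hxk_mono : StrictMono (fun m : ℕ => xk (2 * m + 1)))
    (hxi_range : Set.range (fun m : ℕ => xi (2 * m + 1)) =
      {n : ℕ | 0 < n ∧ ¬∃ m : ℕ, 1 ≤ m ∧ n = i * m})
    (hxk_range : Set.range (fun m : ℕ => xk (2 * m + 1)) =
      {n : ℕ | 0 < n ∧ ¬∃ m : ℕ, 1 ≤ m ∧ n = k * m}) :
    (∀ m : ℕ, xk (2 * m + 1) ≤ xi (2 * m + 1)) ∧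
      Tendsto (fun m : ℕ => xi (2 * m + 1) - xk (2 * m + 1)) atTop atTop ∧
      Tendsto (fun n : ℕ => ((xi n : ℤ) - (xk n : ℤ)).natAbs) atTop atTop := by
  have hk : 2 ≤ k := by omega
  have hxi : (fun m : ℕ => xi (2 * m + 1)) = eN i :=
    (hxi_mono.range_inj (eN_mono hi)).mp (hxi_range.trans (eN_range hi).symm)
  have hxk : (fun m : ℕ => xk (2 * m + 1)) = eN k :=
    (hxk_mono.range_inj (eN_mono hk)).mp (hxk_range.trans (eN_range hk).symm)
  have hxi' : ∀ m, xi (2 * m + 1) = eN i m := fun m => congrFun hxi m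
  have hxk' : ∀ m, xk (2 * m + 1) = eN k m := fun m => congrFun hxk m
  have hle : ∀ m : ℕ, m / (k-1) ≤ m / (i-1) :=
    fun m => Nat.div_le_div_left (by omega) (by omega)
  refine ⟨fun m => by rw [hxi' m, hxk' m]; simp only [eN]; have := hle m; omega, ?_, ?_⟩
  · rw [tendsto_atTop_atTop]
    intro b
    refine ⟨(b + (i-1)) * ((k-1) * (i-1)), fun m hm => ?_⟩
    rw [hxi' m, hxk' m]
    have := key b (k-1) (i-1) m (by omega) (by omega) hm
    simp only [eN]; omega
  · rw [tendsto_atTop_atTop]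
    intro b
    refine ⟨2 * ((b + (i-1)) * ((k-1) * (i-1)) + b) + 2, fun n hn => ?_⟩
    rcases Nat.even_or_odd n with ⟨m, hm⟩ | ⟨m, hm⟩
    · have hm1 : 1 ≤ m := by omega
      have hmb : b ≤ m := by omega
      rw [hm, show m + m = 2 * m by ring, hxi_even m hm1, hxk_even m hm1]
      have h : (i+1) * m ≤ k * m := Nat.mul_le_mul_right m (by omega)
      rw [Nat.add_mul, Nat.one_mul] at h
      omega
    · rw [hm, hxi' m, hxk' m]
      have h1 := key b (k-1) (i-1) m (by omega) (by omega) (by omega)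
      simp only [eN]
      omega
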